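/- The set of ex-ante efficient lotteries coincides with the set of ex-post efficient lotteries if and only if the set of ex-ante efficient lotteries is convex (i.e., closed under convex combinations t·p + (1−t)·q for t ∈ [0,1]). -/

import Mathlib

attribute [local instance] Classical.propDecidable

/-- The strict part of a preference relation. -/
def strictPref {X : Type*} (r : X → X → Prop) (x y : X) : Prop := r x y ∧ ¬ r y x

/-- A preference: a complete (total) and transitive binary relation. -/
def IsPrefOrder {X : Type*} (r : X → X → Prop) : Prop :=
  (∀ x y, r x y ∨ r y x) ∧ Transitive r

/-- A lottery over the finite set of outcomes `X`. -/
def IsLottery {X : Type*} [Fintype X] (p : X → ℝ) : Prop :=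
  (∀ x, 0 ≤ p x) ∧ ∑ x, p x = 1

/-- Total weight a lottery `p` places on outcomes strictly preferred to `x`. -/
noncomputable def upWeight {X : Type*} [Fintype X] (r : X → X → Prop) (p : X → ℝ) (x : X) : ℝ :=
  ∑ y ∈ Finset.univ.filter (fun y => strictPref r y x), p y

/-- First-order stochastic dominance (weak): `p ≿ q`. -/
def SDge {X : Type*} [Fintype X] (r : X → X → Prop) (p q : X → ℝ) : Prop :=
  ∀ x, upWeight r q x ≤ upWeight r p x

/-- First-order stochastic dominance (strict): `p ≻ q`. -/
def SDgt {X : Type*} [Fintype X] (r : X → X → Prop) (p q : X → ℝ) : Prop :=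
  SDge r p q ∧ ∃ x, upWeight r q x < upWeight r p x

/-- A lottery `p` is ex-ante efficient if no lottery weakly SD-dominates it for all agents
and strictly for some agent. -/
def ExAnteEff {X N : Type*} [Fintype X] (pref : N → X → X → Prop) (p : X → ℝ) : Prop :=
  ¬ ∃ q : X → ℝ, IsLottery q ∧ (∀ i, SDge (pref i) q p) ∧ ∃ j, SDgt (pref j) q p

/-- An outcome is Pareto optimal if no outcome is weakly better for all agents and
strictly better for some agent. -/
def ParetoOptimal {X N : Type*} (pref : N → X → X → Prop) (x : X) : Prop :=
  ¬ ∃ y, (∀ i, pref i y x) ∧ ∃ j, strictPref (pref j) y x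

/-- A lottery is ex-post efficient if it is supported on Pareto optimal outcomes. -/
def ExPostEff {X N : Type*} [Fintype X] (pref : N → X → X → Prop) (p : X → ℝ) : Prop :=
  ∀ x, 0 < p x → ParetoOptimal pref x

/-- `u` is a utility representation of the preference `r`. -/
def Represents {X : Type*} (u : X → ℝ) (r : X → X → Prop) : Prop :=
  ∀ x y, (u y ≤ u x ↔ r x y)

lemma upWeight_nonneg {X : Type*} [Fintype X] (r : X → X → Prop) {p : X → ℝ}
    (hp : ∀ x, 0 ≤ p x) (z : X) : 0 ≤ upWeight r p z :=
  Finset.sum_nonneg fun y _ => hp y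

lemma upWeight_le {X : Type*} [Fintype X] (r : X → X → Prop) {p : X → ℝ}
    (hp : IsLottery p) (z : X) : upWeight r p z ≤ 1 - p z := by
  have hz : z ∉ Finset.univ.filter (fun y => strictPref r y z) := by
    intro h0; rw [Finset.mem_filter] at h0; exact h0.2.2 h0.2.1
  have h := Finset.sum_le_sum_of_subset_of_nonneg
    (Finset.subset_univ (insert z (Finset.univ.filter (fun y => strictPref r y z))))
    (fun x _ _ => hp.1 x)
  rw [Finset.sum_insert hz, hp.2] at h
  rw [upWeight]; linarith

lemma upWeight_delta {X : Type*} [Fintype X] (r : X → X → Prop) (x z : X) :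
    upWeight r (fun y => if y = x then (1:ℝ) else 0) z
      = if strictPref r x z then 1 else 0 := by
  rw [upWeight, Finset.sum_ite_eq' (Finset.univ.filter (fun y => strictPref r y z)) x (fun _ => (1:ℝ))]
  simp

lemma exAnte_to_exPost {X N : Type*} [Fintype X] (pref : N → X → X → Prop)
    (hpref : ∀ i, IsPrefOrder (pref i)) {p : X → ℝ} (hp : IsLottery p)
    (h : ExAnteEff pref p) : ExPostEff pref p := by
  intro x hx
  by_contra hpo
  rw [ParetoOptimal, not_not] at hpo
  obtain ⟨y, hall, j, hj⟩ := hpo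
  have hyx : y ≠ x := by
    rintro rfl
    exact hj.2 (((hpref j).1 y y).elim id id)
  set q : X → ℝ := fun z => p z + p x * ((if z = y then 1 else 0) - (if z = x then 1 else 0)) with hqdef
  have hql : IsLottery q := by
    constructor
    · intro z
      rcases eq_or_ne z x with rfl | hzx
      · simp [hqdef, hyx.symm]
      · rcases eq_or_ne z y with rfl | hzy
        · simp [hqdef, hzx]; nlinarith [hp.1 z, hx.le]
        · simp [hqdef, hzx, hzy, hp.1 z]
    · have : ∑ z, q z = (∑ z, p z) + p x *
        ((∑ z, if z = y then (1:ℝ) else 0) - (∑ z, if z = x then (1:ℝ) else 0)) := by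
        rw [Finset.sum_add_distrib, ← Finset.mul_sum, Finset.sum_sub_distrib]
      rw [this, hp.2]
      simp
  have hup : ∀ (r : X → X → Prop) (z : X), upWeight r q z = upWeight r p z
      + p x * ((if strictPref r y z then 1 else 0) - (if strictPref r x z then 1 else 0)) := by
    intro r z
    rw [upWeight, upWeight]
    rw [show (∑ w ∈ Finset.univ.filter (fun w => strictPref r w z), q w)
        = (∑ w ∈ Finset.univ.filter (fun w => strictPref r w z), p w)
        + p x * ((∑ w ∈ Finset.univ.filter (fun w => strictPref r w z), if w = y then (1:ℝ) else 0)
          - (∑ w ∈ Finset.univ.filter (fun w => strictPref r w z), if w = x then (1:ℝ) else 0)) by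
      rw [Finset.sum_add_distrib, ← Finset.mul_sum, Finset.sum_sub_distrib]]
    rw [Finset.sum_ite_eq' _ y (fun _ => (1:ℝ)), Finset.sum_ite_eq' _ x (fun _ => (1:ℝ))]
    simp
  have hkey : ∀ i z, strictPref (pref i) x z → strictPref (pref i) y z := by
    intro i z hxz
    refine ⟨(hpref i).2 (hall i) hxz.1, fun hzy => hxz.2 ((hpref i).2 hzy (hall i))⟩
  apply h
  refine ⟨q, hql, ?_, j, ?_⟩
  · intro i z
    rw [hup]
    rcases Classical.em (strictPref (pref i) x z) with hc | hc
    · simp [hc, hkey i z hc]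
    · have : (0:ℝ) ≤ (if strictPref (pref i) y z then 1 else 0) := by positivity
      simp only [hc, if_false]
      nlinarith [hp.1 x]
  · constructor
    · intro z
      rw [hup]
      rcases Classical.em (strictPref (pref j) x z) with hc | hc
      · simp [hc, hkey j z hc]
      · have : (0:ℝ) ≤ (if strictPref (pref j) y z then 1 else 0) := by positivity
        simp only [hc, if_false]
        nlinarith [hp.1 x]
    · refine ⟨x, ?_⟩
      rw [hup]
      have hxx : ¬ strictPref (pref j) x x := fun h' => h'.2 h'.1
      simp [hj, hxx]
      exact hx

lemma dirac_exAnte {X N : Type*} [Fintype X] (pref : N → X → X → Prop)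
    (hpref : ∀ i, IsPrefOrder (pref i)) {x : X} (hx : ParetoOptimal pref x) :
    ExAnteEff pref (fun y => if y = x then (1:ℝ) else 0) := by
  rintro ⟨q, hq, hge, j, hgt⟩
  have step1 : ∀ i y, 0 < q y → pref i y x := by
    intro i y hy
    by_contra hny
    have hxy : strictPref (pref i) x y := ⟨((hpref i).1 x y).resolve_right hny, hny⟩
    have h1 := hge i y
    rw [upWeight_delta, if_pos hxy] at h1
    have h2 := upWeight_le (pref i) hq y
    linarith
  have step2 : ∃ y, 0 < q y ∧ strictPref (pref j) y x := by
    by_contra hno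
    push_neg at hno
    obtain ⟨z, hz⟩ := hgt.2
    rw [upWeight_delta] at hz
    rcases Classical.em (strictPref (pref j) x z) with hc | hc
    · rw [if_pos hc] at hz
      have := upWeight_le (pref j) hq z
      have := hq.1 z
      linarith
    · rw [if_neg hc] at hz
      have : upWeight (pref j) q z = 0 := by
        rw [upWeight]
        apply Finset.sum_eq_zero
        intro w hw
        rw [Finset.mem_filter] at hw
        by_contra hqw
        have hqw' : 0 < q w := lt_of_le_of_ne (hq.1 w) (Ne.symm hqw)
        have hwx : pref j w x := step1 j w hqw'
        have hxw : pref j x w := by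
          by_contra hxw
          exact hno w hqw' ⟨hwx, hxw⟩
        exact hc ⟨(hpref j).2 hxw hw.2.1, fun hzx => hw.2.2 ((hpref j).2 hzx hxw)⟩
      linarith
  obtain ⟨y, hy, hs⟩ := step2
  exact hx ⟨y, fun i => step1 i y hy, j, hs⟩

/-- Ex-ante efficiency coincides with ex-post efficiency iff the set of
ex-ante efficient lotteries is convex. -/
theorem stmt_4 {X N : Type*} [Fintype X] [Nonempty X] [Fintype N] [Nonempty N]
    (pref : N → X → X → Prop) (hpref : ∀ i, IsPrefOrder (pref i)) :
    ({p : X → ℝ | IsLottery p ∧ ExAnteEff pref p} =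
        {p : X → ℝ | IsLottery p ∧ ExPostEff pref p}) ↔
      Convex ℝ {p : X → ℝ | IsLottery p ∧ ExAnteEff pref p} := by
  constructor
  · intro hEq
    rw [hEq]
    intro p hp q hq a b ha hb hab
    simp only [Set.mem_setOf_eq] at *
    refine ⟨⟨fun z => by
        have := hp.1.1 z; have := hq.1.1 z
        simp only [Pi.add_apply, Pi.smul_apply, smul_eq_mul]
        positivity, ?_⟩, ?_⟩
    · simp only [Pi.add_apply, Pi.smul_apply, smul_eq_mul]
      rw [Finset.sum_add_distrib, ← Finset.mul_sum, ← Finset.mul_sum, hp.1.2, hq.1.2]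
      linarith
    · intro z hz
      simp only [Pi.add_apply, Pi.smul_apply, smul_eq_mul] at hz
      have hc : 0 < a * p z ∨ 0 < b * q z := by
        by_contra hcc; push_neg at hcc; linarith [hcc.1, hcc.2]
      rcases hc with hc | hc
      · have : 0 < p z := by
          by_contra h'; push_neg at h'
          nlinarith [hp.1.1 z]
        exact hp.2 z this
      · have : 0 < q z := by
          by_contra h'; push_neg at h'
          nlinarith [hq.1.1 z]
        exact hq.2 z this
  · intro hconv
    ext p
    simp only [Set.mem_setOf_eq]
    constructor
    · rintro ⟨hl, ha⟩
      exact ⟨hl, exAnte_to_exPost pref hpref hl ha⟩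
    · rintro ⟨hl, hpost⟩
      refine ⟨hl, ?_⟩
      set t := Finset.univ.filter (fun x => 0 < p x) with ht
      have hsum : ∑ x ∈ t, p x = 1 := by
        rw [← hl.2]
        apply Finset.sum_subset (Finset.subset_univ t)
        intro x _ hxt
        rw [ht, Finset.mem_filter] at hxt
        push_neg at hxt
        exact le_antisymm (hxt (Finset.mem_univ x)) (hl.1 x)
      have hmem := hconv.sum_mem (t := t)
        (w := fun x => p x) (z := fun x y => if y = x then (1:ℝ) else 0)
        (fun x hx => hl.1 x) hsum
        (fun x hx => by
          rw [ht, Finset.mem_filter] at hx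
          refine ⟨⟨fun y => by positivity, by simp⟩, dirac_exAnte pref hpref (hpost x hx.2)⟩)
      have hrepr : (∑ x ∈ t, p x • fun y => if y = x then (1:ℝ) else 0) = p := by
        funext y
        rw [Finset.sum_apply]
        simp only [Pi.smul_apply, smul_eq_mul, mul_ite, mul_one, mul_zero]
        rw [Finset.sum_ite_eq t y (fun x => p x)]
        rcases Classical.em (y ∈ t) with hy | hy
        · rw [if_pos hy]
        · rw [if_neg hy]
          rw [ht, Finset.mem_filter] at hy
          push_neg at hy
          exact (le_antisymm (hy (Finset.mem_univ y)) (hl.1 y)).symm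
      rw [hrepr] at hmem
      exact hmem.2
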